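/- Let D ⊂ ℝⁿ be a domain, f : D → ℝⁿ continuous, open and discrete, E* closed in the extended space with C(f, ∂D) ⊆ E* and E = f⁻¹(E*). Let D₁ be a connected component of D \ E. Then the cluster set of f restricted to D₁ at the boundary of D₁ satisfies C(f, ∂D₁) ⊆ ∂f(D₁); in particular f is a closed map on D₁ (images of relatively closed subsets of D₁ are relatively closed in f(D₁)). -/

import Mathlib

open Set Metric Topology Filter

/-- The cluster set `C(f, ∂D)` in the one-point compactification of `ℝⁿ`. -/
def ClusterSetInfty {n : ℕ} (f : EuclideanSpace ℝ (Fin n) → EuclideanSpace ℝ (Fin n))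
    (D : Set (EuclideanSpace ℝ (Fin n))) : Set (OnePoint (EuclideanSpace ℝ (Fin n))) :=
  {w | ∃ x₀ ∈ frontier (OnePoint.some '' D),
    ∃ u : ℕ → EuclideanSpace ℝ (Fin n), (∀ k, u k ∈ D) ∧
      Tendsto (fun k => OnePoint.some (u k)) atTop (𝓝 x₀) ∧
      Tendsto (fun k => OnePoint.some (f (u k))) atTop (𝓝 w)}

/-- The finite cluster set `C(f, ∂A)` of `f : A → ℝⁿ`. -/
def ClusterSet {n : ℕ} (f : EuclideanSpace ℝ (Fin n) → EuclideanSpace ℝ (Fin n))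
    (A : Set (EuclideanSpace ℝ (Fin n))) : Set (EuclideanSpace ℝ (Fin n)) :=
  {w | ∃ z₀ ∈ frontier A, ∃ u : ℕ → EuclideanSpace ℝ (Fin n), (∀ k, u k ∈ A) ∧
      Tendsto u atTop (𝓝 z₀) ∧ Tendsto (fun k => f (u k)) atTop (𝓝 w)}

/-- `f` is a discrete map on `D`. -/
def IsDiscreteOn {X : Type*} [TopologicalSpace X] {Y : Type*} (f : X → Y) (D : Set X) : Prop :=
  ∀ y : Y, ∀ x ∈ D, ¬ AccPt x (Filter.principal (D ∩ f ⁻¹' {y}))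

/-- `f` is an open map on `D`. -/
def IsOpenOn {X Y : Type*} [TopologicalSpace X] [TopologicalSpace Y] (f : X → Y)
    (D : Set X) : Prop :=
  ∀ U ⊆ D, IsOpen U → IsOpen (f '' U)

/-- Let `D ⊂ ℝⁿ` be a domain, `f : D → ℝⁿ` continuous, open and discrete, `E*` closed in the
extended space with `C(f, ∂D) ⊆ E*` and `E = f⁻¹(E*)`. Let `D₁` be a connected component of
`D \ E`. Then `C(f, ∂D₁) ⊆ ∂ f(D₁)`; in particular `f` is a closed map on `D₁`. -/
theorem stmt2 {n : ℕ} (hn : 2 ≤ n)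
    (D : Set (EuclideanSpace ℝ (Fin n)))
    (f : EuclideanSpace ℝ (Fin n) → EuclideanSpace ℝ (Fin n))
    (hD : IsOpen D) (hDconn : IsConnected D)
    (hf : ContinuousOn f D) (hfo : IsOpenOn f D) (hfd : IsDiscreteOn f D)
    (Estar : Set (OnePoint (EuclideanSpace ℝ (Fin n)))) (hEstar : IsClosed Estar)
    (hcluster : ClusterSetInfty f D ⊆ Estar)
    (E : Set (EuclideanSpace ℝ (Fin n)))
    (hE : E = {x ∈ D | OnePoint.some (f x) ∈ Estar})
    (D₁ : Set (EuclideanSpace ℝ (Fin n)))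
    (hD₁ : ∃ z ∈ D \ E, D₁ = connectedComponentIn (D \ E) z) :
    ClusterSet f D₁ ⊆ frontier (f '' D₁) ∧
      ∀ S ⊆ D₁, closure S ∩ D₁ ⊆ S → closure (f '' S) ∩ (f '' D₁) ⊆ f '' S := by
  obtain ⟨z, hzDE, hD₁eq⟩ := hD₁
  -- basic facts
  have hopenDE : IsOpen (D \ E) := by
    have : D \ E = D ∩ f ⁻¹' (OnePoint.some ⁻¹' Estarᶜ) := by
      ext x
      simp only [hE, mem_diff, mem_sep_iff, mem_inter_iff, mem_preimage, mem_compl_iff]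
      tauto
    rw [this]
    exact hf.isOpen_inter_preimage hD (hEstar.isOpen_compl.preimage OnePoint.continuous_coe)
  have hD₁open : IsOpen D₁ := hD₁eq ▸ hopenDE.connectedComponentIn
  have hD₁sub : D₁ ⊆ D \ E := hD₁eq ▸ connectedComponentIn_subset _ _
  have hD₁subD : D₁ ⊆ D := fun x hx => (hD₁sub hx).1
  have hnot : ∀ x ∈ D₁, (OnePoint.some (f x)) ∉ Estar := by
    intro x hx hmem
    exact (hD₁sub hx).2 (hE ▸ ⟨hD₁subD hx, hmem⟩)
  -- relative closedness of the component
  have hrelcl : ∀ y ∈ closure D₁, y ∈ D \ E → y ∈ D₁ := by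
    intro y hycl hyDE
    have hyc : y ∈ connectedComponentIn (D \ E) y := mem_connectedComponentIn hyDE
    have hopenc : IsOpen (connectedComponentIn (D \ E) y) := hopenDE.connectedComponentIn
    obtain ⟨p, hp1, hp2⟩ := mem_closure_iff.mp hycl _ hopenc hyc
    have h1 : connectedComponentIn (D \ E) y = connectedComponentIn (D \ E) p :=
      connectedComponentIn_eq hp1
    have h2 : connectedComponentIn (D \ E) z = connectedComponentIn (D \ E) p :=
      connectedComponentIn_eq (hD₁eq ▸ hp2)
    rw [hD₁eq, h2, ← h1]
    exact hyc
  have hopenimg : IsOpen (OnePoint.some '' D) :=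
    OnePoint.isOpenEmbedding_coe.isOpenMap _ hD
  -- the key lemma: limits of f along sequences approaching the boundary of D₁ land in Estar
  have key : ∀ (z₀ : EuclideanSpace ℝ (Fin n)) (u : ℕ → EuclideanSpace ℝ (Fin n))
      (w : EuclideanSpace ℝ (Fin n)), z₀ ∈ closure D₁ → z₀ ∉ D₁ → (∀ k, u k ∈ D₁) →
      Tendsto u atTop (𝓝 z₀) → Tendsto (fun k => f (u k)) atTop (𝓝 w) →
      OnePoint.some w ∈ Estar := by
    intro z₀ u w hzcl hznot hu hul hfl
    by_cases hzD : z₀ ∈ D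
    · -- z₀ ∈ D, hence z₀ ∈ E and w = f z₀
      have hzE : z₀ ∈ E := by
        by_contra hzE
        exact hznot (hrelcl z₀ hzcl ⟨hzD, hzE⟩)
      have hfz : OnePoint.some (f z₀) ∈ Estar := by
        rw [hE] at hzE; exact hzE.2
      have htend : Tendsto (fun k => f (u k)) atTop (𝓝 (f z₀)) := by
        have : Tendsto u atTop (𝓝[D] z₀) :=
          tendsto_nhdsWithin_iff.mpr ⟨hul, Eventually.of_forall fun k => hD₁subD (hu k)⟩
        exact (hf z₀ hzD).tendsto.comp this
      have : w = f z₀ := tendsto_nhds_unique hfl htend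
      rwa [this]
    · -- z₀ ∉ D: use the cluster set hypothesis at ∂D
      apply hcluster
      refine ⟨OnePoint.some z₀, ?_, u, fun k => hD₁subD (hu k), ?_, ?_⟩
      · rw [hopenimg.frontier_eq]
        constructor
        · exact mem_closure_of_tendsto
            ((OnePoint.continuous_coe.tendsto z₀).comp hul)
            (Eventually.of_forall fun k => mem_image_of_mem _ (hD₁subD (hu k)))
        · rintro ⟨y, hyD, hy⟩
          exact hzD (OnePoint.coe_eq_coe.mp hy ▸ hyD)
      · exact (OnePoint.continuous_coe.tendsto z₀).comp hul
      · exact (OnePoint.continuous_coe.tendsto w).comp hfl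
  have himg : IsOpen (f '' D₁) := hfo D₁ hD₁subD hD₁open
  -- part 1
  have part1 : ClusterSet f D₁ ⊆ frontier (f '' D₁) := by
    rintro w ⟨z₀, hz₀, u, hu, hul, hfl⟩
    have hzcl : z₀ ∈ closure D₁ := hz₀.1
    have hznot : z₀ ∉ D₁ := by
      intro h
      exact hz₀.2 (by rwa [hD₁open.interior_eq])
    have hmem : OnePoint.some w ∈ Estar := key z₀ u w hzcl hznot hu hul hfl
    rw [himg.frontier_eq]
    constructor
    · exact mem_closure_of_tendsto hfl
        (Eventually.of_forall fun k => mem_image_of_mem _ (hu k))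
    · rintro ⟨x, hx, rfl⟩
      exact hnot x hx hmem
  refine ⟨part1, ?_⟩
  -- part 2: closedness
  intro S hS hScl w ⟨hwcl, x, hx, hfx⟩
  obtain ⟨y, hy, hyl⟩ := mem_closure_iff_seq_limit.mp hwcl
  choose s hsS hfs using hy
  have hfsl : Tendsto (fun k => f (s k)) atTop (𝓝 w) := by
    simpa only [hfs] using hyl
  have hcontra : OnePoint.some w ∈ Estar → False := by
    intro hmem
    exact hnot x hx (hfx ▸ hmem)
  by_cases hbd : ∃ R : ℝ, ∃ᶠ k in atTop, s k ∈ closedBall 0 R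
  · obtain ⟨R, hR⟩ := hbd
    obtain ⟨φ, hφ, hφmem⟩ := extraction_of_frequently_atTop hR
    obtain ⟨z₀, _, ψ, hψ, hzl⟩ := (isCompact_closedBall (0 : EuclideanSpace ℝ (Fin n)) R).tendsto_subseq hφmem
    set v : ℕ → EuclideanSpace ℝ (Fin n) := fun k => s (φ (ψ k)) with hv
    have hvS : ∀ k, v k ∈ S := fun k => hsS _
    have hvD₁ : ∀ k, v k ∈ D₁ := fun k => hS (hvS k)
    have hvl : Tendsto v atTop (𝓝 z₀) := hzl
    have hfvl : Tendsto (fun k => f (v k)) atTop (𝓝 w) :=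
      hfsl.comp ((hφ.comp hψ).tendsto_atTop)
    have hzcl : z₀ ∈ closure D₁ :=
      mem_closure_of_tendsto hvl (Eventually.of_forall hvD₁)
    by_cases hz₀ : z₀ ∈ D₁
    · -- limit inside D₁: z₀ ∈ S and w = f z₀
      have hz₀S : z₀ ∈ S := hScl ⟨mem_closure_of_tendsto hvl (Eventually.of_forall hvS), hz₀⟩
      have htend : Tendsto (fun k => f (v k)) atTop (𝓝 (f z₀)) := by
        have : Tendsto v atTop (𝓝[D] z₀) :=
          tendsto_nhdsWithin_iff.mpr ⟨hvl, Eventually.of_forall fun k => hD₁subD (hvD₁ k)⟩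
        exact (hf z₀ (hD₁subD hz₀)).tendsto.comp this
      have : w = f z₀ := tendsto_nhds_unique hfvl htend
      exact this ▸ mem_image_of_mem f hz₀S
    · exact absurd (key z₀ v w hzcl hz₀ hvD₁ hvl hfvl) hcontra
  · -- the sequence escapes to infinity
    exfalso
    push_neg at hbd
    have hnorm : Tendsto (fun k => ‖s k‖) atTop atTop := by
      rw [Filter.tendsto_atTop]
      intro R
      filter_upwards [hbd R] with k hk
      simp only [Metric.mem_closedBall, dist_zero_right, not_le] at hk
      exact hk.le
    have hcob : Tendsto s atTop (Bornology.cobounded (EuclideanSpace ℝ (Fin n))) :=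
      tendsto_norm_atTop_iff_cobounded.mp hnorm
    have hinf : Tendsto (fun k => OnePoint.some (s k)) atTop (𝓝 (OnePoint.infty)) := by
      refine OnePoint.tendsto_coe_infty.comp ?_
      rwa [Filter.coclosedCompact_eq_cocompact, ← Metric.cobounded_eq_cocompact]
    apply hcontra
    apply hcluster
    refine ⟨OnePoint.infty, ?_, s, fun k => hD₁subD (hS (hsS k)), hinf, ?_⟩
    · rw [hopenimg.frontier_eq]
      refine ⟨mem_closure_of_tendsto hinf
        (Eventually.of_forall fun k => mem_image_of_mem _ (hD₁subD (hS (hsS k)))), ?_⟩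
      rintro ⟨y, _, hy⟩
      exact OnePoint.infty_ne_coe y hy.symm
    · exact (OnePoint.continuous_coe.tendsto w).comp hfsl
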